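/- If Ψ is a coalition partition of a graph G, then the maximum degree of the coalition graph CG(G, Ψ) is at most Δ(G) + 1, where Δ(G) is the maximum degree of G. -/

import Mathlib

open SimpleGraph

attribute [local instance] Classical.propDecidable

def Dominates {V : Type*} (G : SimpleGraph V) (S : Set V) : Prop :=
  ∀ v, v ∉ S → ∃ u ∈ S, G.Adj u v

def Coalition {V : Type*} (G : SimpleGraph V) (A B : Set V) : Prop :=
  Disjoint A B ∧ ¬ Dominates G A ∧ ¬ Dominates G B ∧ Dominates G (A ∪ B)

def IsCoalitionPartition {V : Type*} (G : SimpleGraph V) (P : Finset (Set V)) : Prop :=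
  (∀ A ∈ P, A.Nonempty) ∧
  (∀ A ∈ P, ∀ B ∈ P, A ≠ B → Disjoint A B) ∧
  (∀ v : V, ∃ A ∈ P, v ∈ A) ∧
  (∀ A ∈ P, (Dominates G A ∧ ∃ v, A = {v}) ∨
    (¬ Dominates G A ∧ ∃ B ∈ P, B ≠ A ∧ Coalition G A B))

noncomputable def coalitionNumber {V : Type*} (G : SimpleGraph V) : ℕ :=
  sSup {n | ∃ P : Finset (Set V), IsCoalitionPartition G P ∧ P.card = n}

def coalitionGraph {V : Type*} (G : SimpleGraph V) (P : Finset (Set V)) :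
    SimpleGraph {A : Set V // A ∈ P} where
  Adj A B := Coalition G A.1 B.1
  symm := by
    constructor
    rintro A B ⟨d, na, nb, u⟩
    exact ⟨d.symm, nb, na, by rwa [Set.union_comm]⟩
  loopless := by
    constructor
    rintro ⟨A, hA⟩ ⟨d, na, nb, u⟩
    rw [Set.union_self] at u
    exact na u

theorem stmt1 {V : Type*} [Fintype V] (G : SimpleGraph V) (P : Finset (Set V))
    (hP : IsCoalitionPartition G P) :
    (coalitionGraph G P).maxDegree ≤ G.maxDegree + 1 := by
  apply SimpleGraph.maxDegree_le_of_forall_degree_le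
  intro A
  by_cases hdom : Dominates G A.1
  · -- A dominates, so it has no neighbors
    have : (coalitionGraph G P).neighborFinset A = ∅ := by
      ext B
      simp only [SimpleGraph.mem_neighborFinset, Finset.notMem_empty, iff_false]
      rintro ⟨_, na, _, _⟩
      exact na hdom
    rw [SimpleGraph.degree, this]
    simp
  · -- A does not dominate: get undominated vertex v
    have : ¬ ∀ v, v ∉ A.1 → ∃ u ∈ A.1, G.Adj u v := hdom
    push_neg at this
    obtain ⟨v, hvA, hv⟩ := this
    -- every coalition partner B contains v or a neighbor of v
    have key : ∀ B ∈ (coalitionGraph G P).neighborFinset A,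
        ∃ w, w ∈ (B : {A : Set V // A ∈ P}).1 ∧ (w = v ∨ G.Adj w v) := by
      intro B hB
      rw [SimpleGraph.mem_neighborFinset] at hB
      obtain ⟨_, _, _, hu⟩ := hB
      by_cases hvB : v ∈ B.1
      · exact ⟨v, hvB, Or.inl rfl⟩
      · have hvAB : v ∉ A.1 ∪ B.1 := by
          simp [hvA, hvB]
        obtain ⟨u, huAB, hadj⟩ := hu v hvAB
        rcases huAB with h | h
        · exact absurd hadj (hv u h)
        · exact ⟨u, h, Or.inr hadj⟩
    classical
    have hcard : ((coalitionGraph G P).neighborFinset A).card ≤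
        (insert v (G.neighborFinset v)).card := by
      apply Finset.card_le_card_of_injOn
        (fun B => if h : B ∈ (coalitionGraph G P).neighborFinset A
          then Classical.choose (key B h) else v)
      · intro B hB
        simp only [hB, dif_pos]
        obtain ⟨hw, hwv⟩ := Classical.choose_spec (key B hB)
        rcases hwv with h | h
        · simp [h]
        · have hAB : (coalitionGraph G P).Adj A B := by simpa using hB
          simp [Finset.mem_insert, SimpleGraph.mem_neighborFinset, h.symm, hAB]
      · intro B hB B' hB' heq
        simp only [Finset.mem_coe] at hB hB'
        simp only [hB, hB', dif_pos] at heq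
        obtain ⟨hw, _⟩ := Classical.choose_spec (key B hB)
        obtain ⟨hw', _⟩ := Classical.choose_spec (key B' hB')
        rw [heq] at hw
        by_contra hne
        have hne' : B.1 ≠ B'.1 := fun h => hne (Subtype.ext h)
        exact Set.disjoint_left.mp (hP.2.1 B.1 B.2 B'.1 B'.2 hne') hw hw'
    calc (coalitionGraph G P).degree A
        = ((coalitionGraph G P).neighborFinset A).card := rfl
      _ ≤ (insert v (G.neighborFinset v)).card := hcard
      _ ≤ (G.neighborFinset v).card + 1 := Finset.card_insert_le _ _
      _ = G.degree v + 1 := rfl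
      _ ≤ G.maxDegree + 1 := by
          exact Nat.add_le_add_right (G.degree_le_maxDegree v) 1
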